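/- Under a product partition model where p(y, m | K) = C_K(a)^{-1} ∏_{r∈m} a_r p(y^r), the posterior distribution of K given y satisfies p(K | y) ∝ p(K) · [A^K]_{1,N+1} / C_K(a), where A_{s,t} = a_{[s,t)} p(y^{[s,t)}) for s < t and C_K(a) = Σ_{m ∈ M_K} ∏_{r∈m} a_r. -/

import Mathlib

open scoped Classical

/-- The set of segmentations of `{1,...,N}` into `K` segments, encoded by change-points
`1 = τ₀ < ... < τ_K = N+1` (values in `Fin (N+2)`). -/
def Seg (N K : ℕ) : Finset (Fin (K + 1) → Fin (N + 2)) :=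
  Finset.univ.filter (fun τ =>
    StrictMono τ ∧ τ 0 = 1 ∧ τ (Fin.last K) = ⟨N + 1, Nat.lt_succ_self _⟩)

/-- The segment-weight matrix: `A s t = w s t` if `1 ≤ s < t`, else `0`. -/
def segMat (N : ℕ) (w : Fin (N + 2) → Fin (N + 2) → ℝ) :
    Matrix (Fin (N + 2)) (Fin (N + 2)) ℝ :=
  fun s t => if 1 ≤ (s : ℕ) ∧ s < t then w s t else 0

def pathSet (n K : ℕ) (s t : Fin n) : Finset (Fin (K + 1) → Fin n) :=
  Finset.univ.filter (fun τ => τ 0 = s ∧ τ (Fin.last K) = t)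

lemma pow_apply_eq_sum_paths {n : ℕ} (A : Matrix (Fin n) (Fin n) ℝ) (K : ℕ) (s : Fin n) :
    ∀ t, (A ^ K) s t = ∑ τ ∈ pathSet n K s t, ∏ j : Fin K, A (τ j.castSucc) (τ j.succ) := by
  induction K with
  | zero =>
    intro t
    by_cases h : s = t
    · subst h
      have hset : pathSet n 0 s s = {fun _ => s} := by
        ext τ
        simp only [pathSet, Finset.mem_filter, Finset.mem_univ, true_and,
          Finset.mem_singleton]
        constructor
        · rintro ⟨h1, _⟩
          funext i
          have : i = 0 := Fin.fin_one_eq_zero i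
          rw [this, h1]
        · rintro rfl; exact ⟨rfl, rfl⟩
      simp [hset, pow_zero, Matrix.one_apply]
    · have hset : pathSet n 0 s t = ∅ := by
        ext τ
        simp only [pathSet, Finset.mem_filter, Finset.mem_univ, true_and,
          Finset.notMem_empty, iff_false, not_and]
        intro h1
        have : Fin.last 0 = (0 : Fin 1) := rfl
        rw [this, h1]
        exact fun ht => h (ht ▸ rfl)
      simp [hset, pow_zero, Matrix.one_apply, h]
  | succ K ih =>
    intro t
    rw [pow_succ, Matrix.mul_apply]
    simp_rw [ih, Finset.sum_mul]
    rw [Finset.sum_sigma']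
    refine Finset.sum_bij' (fun p _ => Fin.snoc p.2 t)
      (fun σ _ => ⟨σ (Fin.last K).castSucc, Fin.init σ⟩) ?_ ?_ ?_ ?_ ?_
    · rintro ⟨u, τ⟩ hp
      simp only [Finset.mem_sigma, Finset.mem_univ, true_and, pathSet,
        Finset.mem_filter] at hp
      simp only [pathSet, Finset.mem_filter, Finset.mem_univ, true_and]
      constructor
      · show (Fin.snoc τ t : Fin (K + 2) → Fin n) (Fin.castSucc 0) = s
        rw [Fin.snoc_castSucc]; exact hp.1
      · exact Fin.snoc_last _ _
    · intro σ hσ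
      simp only [pathSet, Finset.mem_filter, Finset.mem_univ, true_and] at hσ
      simp only [Finset.mem_sigma, Finset.mem_univ, true_and, pathSet,
        Finset.mem_filter]
      exact ⟨show σ (Fin.castSucc 0) = s from hσ.1, rfl⟩
    · rintro ⟨u, τ⟩ hp
      simp only [Finset.mem_sigma, Finset.mem_univ, true_and, pathSet,
        Finset.mem_filter] at hp
      obtain ⟨h0, hl⟩ := hp
      simp only [Fin.snoc_castSucc, Fin.init_snoc, hl]
    · intro σ hσ
      simp only [pathSet, Finset.mem_filter, Finset.mem_univ, true_and] at hσ
      show Fin.snoc (Fin.init σ) t = σ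
      conv_lhs => rw [← hσ.2]
      exact Fin.snoc_init_self σ
    · rintro ⟨u, τ⟩ hp
      simp only [Finset.mem_sigma, Finset.mem_univ, true_and, pathSet,
        Finset.mem_filter] at hp
      obtain ⟨h0, hl⟩ := hp
      subst hl
      simp [Fin.prod_univ_castSucc, Fin.snoc_castSucc, Fin.succ_castSucc,
        Fin.snoc_last, Fin.succ_last, - Fin.castSucc_succ]

lemma seg_nonempty (N K : ℕ) (hK : 1 ≤ K) (hKN : K ≤ N) : (Seg N K).Nonempty := by
  refine ⟨fun j => if (j : ℕ) = K then ⟨N + 1, Nat.lt_succ_self _⟩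
    else ⟨(j : ℕ) + 1, by have := j.isLt; omega⟩, ?_⟩
  have hval : ∀ j : Fin (K + 1), (j : ℕ) ≤ K := fun j => Nat.lt_succ_iff.mp j.isLt
  simp only [Seg, Finset.mem_filter, Finset.mem_univ, true_and]
  refine ⟨?_, ?_, ?_⟩
  · intro i j hij
    have h1 : (i : ℕ) < (j : ℕ) := hij
    have h2 := hval i; have h3 := hval j
    by_cases h : (j : ℕ) = K
    · have hi : (i : ℕ) ≠ K := by omega
      simp only []
      rw [if_pos h, if_neg hi]
      simp only [Fin.lt_def, Fin.val_mk]
      omega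
    · have hi : (i : ℕ) ≠ K := by omega
      simp only []
      rw [if_neg h, if_neg hi]
      simp only [Fin.lt_def, Fin.val_mk]
      omega
  · have h0 : ((0 : Fin (K + 1)) : ℕ) ≠ K := by simp; omega
    simp only [if_neg h0]
    apply Fin.ext
    simp
  · simp [Fin.last]

lemma segMat_pow_apply (N K : ℕ) (w : Fin (N + 2) → Fin (N + 2) → ℝ) :
    (segMat N w ^ K) 1 ⟨N + 1, Nat.lt_succ_self _⟩ =
      ∑ τ ∈ Seg N K, ∏ j : Fin K, w (τ j.castSucc) (τ j.succ) := by
  rw [pow_apply_eq_sum_paths]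
  have hsub : Seg N K ⊆ pathSet (N + 2) K 1 ⟨N + 1, Nat.lt_succ_self _⟩ := by
    intro τ hτ
    simp only [Seg, Finset.mem_filter, Finset.mem_univ, true_and] at hτ
    simp only [pathSet, Finset.mem_filter, Finset.mem_univ, true_and]
    exact ⟨hτ.2.1, hτ.2.2⟩
  rw [← Finset.sum_subset hsub]
  · apply Finset.sum_congr rfl
    intro τ hτ
    simp only [Seg, Finset.mem_filter, Finset.mem_univ, true_and] at hτ
    obtain ⟨hmono, h0, hl⟩ := hτ
    apply Finset.prod_congr rfl
    intro j _
    have hlt : τ j.castSucc < τ j.succ := hmono Fin.castSucc_lt_succ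
    have hge : 1 ≤ (τ j.castSucc : ℕ) := by
      have : τ 0 ≤ τ j.castSucc := hmono.monotone (Fin.zero_le _)
      rw [h0] at this
      have h1 : ((1 : Fin (N + 2)) : ℕ) = 1 := rfl
      calc 1 = ((1 : Fin (N + 2)) : ℕ) := h1.symm
        _ ≤ (τ j.castSucc : ℕ) := this
    simp [segMat, hge, hlt]
  · intro τ hτ hnot
    by_contra hne
    have hfac : ∀ j : Fin K, segMat N w (τ j.castSucc) (τ j.succ) ≠ 0 := by
      intro j hj
      exact hne (Finset.prod_eq_zero (Finset.mem_univ j) hj)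
    have hcond : ∀ j : Fin K, 1 ≤ (τ j.castSucc : ℕ) ∧ τ j.castSucc < τ j.succ := by
      intro j
      by_contra hc
      exact hfac j (by simp only [segMat, if_neg hc])
    simp only [pathSet, Finset.mem_filter, Finset.mem_univ, true_and] at hτ
    apply hnot
    simp only [Seg, Finset.mem_filter, Finset.mem_univ, true_and]
    refine ⟨Fin.strictMono_iff_lt_succ.mpr (fun j => (hcond j).2), hτ.1, hτ.2⟩

/-- in the product partition model `p(y, m | K) = C_K(a)⁻¹ ∏_{r∈m} a_r p(y^r)`
(prior `p(m|K) = C_K(a)⁻¹ ∏ a_r`, conditionally independent segments), the posterior on the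
number of segments `K` satisfies `p(K|y) ∝ p(K) · [A^K]_{1,N+1} / C_K(a)`, where
`A_{s,t} = a_{[s,t)} p(y^{[s,t)})` and `C_K(a) = Σ_{m∈M_K} ∏_{r∈m} a_r`. -/
theorem posterior_number_of_segments (N : ℕ) (hN : 1 ≤ N)
    (a py : Fin (N + 2) → Fin (N + 2) → ℝ)
    (ha : ∀ s t, 0 < a s t) (hpy : ∀ s t, 0 < py s t)
    (pK : ℕ → ℝ) (hpK : ∀ K, 1 ≤ K → K ≤ N → 0 < pK K) :
    ∃ c : ℝ, 0 < c ∧ ∀ K ∈ Finset.Icc 1 N,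
      -- posterior p(K|y), with p(y|K) = Σ_m p(m|K) ∏_{r∈m} p(y^r) obtained from the model
      pK K * ((∑ τ ∈ Seg N K, ∏ j : Fin K,
            a (τ j.castSucc) (τ j.succ) * py (τ j.castSucc) (τ j.succ)) /
          (∑ τ ∈ Seg N K, ∏ j : Fin K, a (τ j.castSucc) (τ j.succ))) /
        (∑ K' ∈ Finset.Icc 1 N,
          pK K' * ((∑ τ ∈ Seg N K', ∏ j : Fin K',
                a (τ j.castSucc) (τ j.succ) * py (τ j.castSucc) (τ j.succ)) /
              (∑ τ ∈ Seg N K', ∏ j : Fin K', a (τ j.castSucc) (τ j.succ)))) =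
      c * (pK K * ((segMat N (fun s t => a s t * py s t) ^ K) 1 ⟨N + 1, Nat.lt_succ_self _⟩ /
        (∑ τ ∈ Seg N K, ∏ j : Fin K, a (τ j.castSucc) (τ j.succ)))) := by
  set D := ∑ K' ∈ Finset.Icc 1 N,
      pK K' * ((∑ τ ∈ Seg N K', ∏ j : Fin K',
            a (τ j.castSucc) (τ j.succ) * py (τ j.castSucc) (τ j.succ)) /
          (∑ τ ∈ Seg N K', ∏ j : Fin K', a (τ j.castSucc) (τ j.succ))) with hD
  have hterm : ∀ K' ∈ Finset.Icc 1 N, 0 < pK K' * ((∑ τ ∈ Seg N K', ∏ j : Fin K',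
        a (τ j.castSucc) (τ j.succ) * py (τ j.castSucc) (τ j.succ)) /
      (∑ τ ∈ Seg N K', ∏ j : Fin K', a (τ j.castSucc) (τ j.succ))) := by
    intro K' hK'
    rw [Finset.mem_Icc] at hK'
    have hne := seg_nonempty N K' hK'.1 hK'.2
    have h1 : 0 < ∑ τ ∈ Seg N K', ∏ j : Fin K',
        a (τ j.castSucc) (τ j.succ) * py (τ j.castSucc) (τ j.succ) :=
      Finset.sum_pos (fun τ _ => Finset.prod_pos
        (fun j _ => mul_pos (ha _ _) (hpy _ _))) hne
    have h2 : 0 < ∑ τ ∈ Seg N K', ∏ j : Fin K', a (τ j.castSucc) (τ j.succ) :=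
      Finset.sum_pos (fun τ _ => Finset.prod_pos (fun j _ => ha _ _)) hne
    exact mul_pos (hpK K' hK'.1 hK'.2) (div_pos h1 h2)
  have hDpos : 0 < D := by
    rw [hD]
    exact Finset.sum_pos hterm ⟨1, Finset.mem_Icc.mpr ⟨le_refl 1, hN⟩⟩
  refine ⟨D⁻¹, inv_pos.mpr hDpos, ?_⟩
  intro K hK
  rw [segMat_pow_apply]
  rw [div_eq_mul_inv, mul_comm]
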